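/- Let p be an odd prime and q = p^m with m odd (so q is not a square). Let g be an integer with (q−1)/2 ≤ g < q−2, gcd(2g+2, q−1) = 2, and 2(2g+2) ≡ −1 (mod p), and set n = 2g+3−q (so that q−1+n = 2g+2 and n is even). Then there exist nonzero elements b, ξ of the prime subfield F_p ⊆ F_q with ξ a non-square in F_p such that the polynomial F(X) = X^{2g+2} + b²·X^{2n} − (2b²ξ + 1)·X^n + b²ξ² ∈ F_q[X] is squarefree and F(x) is a nonzero square in F_q for every x ∈ F_q (so y² = F(x) is a smooth F_q-maximal hyperelliptic curve of genus g defined over F_p). -/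

import Mathlib

open Polynomial
open Polynomial

lemma fix_pow_pow {L : Type*} [Monoid L] (p : ℕ) (a : L) (h : a ^ p = a) :
    ∀ m : ℕ, a ^ (p ^ m) = a := by
  intro m
  induction m with
  | zero => simpa using rfl
  | succ k ih => rw [pow_succ, pow_mul, ih, h]

lemma odd_geom (P : ℕ) (hP : Even P) : ∀ j : ℕ, ∃ r : ℕ, Odd r ∧ P * r + 1 = (P + 1) ^ (2 * j + 1) := by
  intro j
  induction j with
  | zero => exact ⟨1, odd_one, by ring_nf⟩
  | succ k ih =>
    obtain ⟨r, hr, heq⟩ := ih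
    refine ⟨(P + 1) ^ 2 * r + (P + 2), ?_, ?_⟩
    · exact (((hP.add_one).pow).mul hr).add_even (by obtain ⟨w,hw⟩ := hP; exact ⟨w+1, by omega⟩)
    · have : 2 * (k + 1) + 1 = (2 * k + 1) + 2 := by ring
      rw [this, pow_add, ← heq]; ring

lemma sq_one_of (L : Type*) [Monoid L] (x : L) (n d : ℕ) (h1 : x ^ n = 1) (h2 : x ^ d = 1)
    (hd : Nat.gcd n d ∣ 2) : x ^ 2 = 1 := by
  obtain ⟨e, he⟩ := hd
  rw [he, pow_mul, (pow_gcd_eq_one.mpr ⟨h1, h2⟩), one_pow]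

lemma zmod5_key : ∀ ξ : ZMod 5, ξ ≠ 0 → (¬ ∃ y : ZMod 5, ξ = y ^ 2) →
    ∃ b₀ : ZMod 5, b₀ ≠ 0 ∧ (b₀ ^ 2 * ξ ≠ -1 ∧ 2 * (b₀ ^ 2 * ξ) ≠ 1) := by decide

lemma choice_lemma (p : ℕ) (hp : p.Prime) (hodd : Odd p) :
    ∃ ξ₀ b₀ : ZMod p, ξ₀ ≠ 0 ∧ b₀ ≠ 0 ∧ (¬ ∃ y : ZMod p, ξ₀ = y ^ 2) ∧
      ((3 : ZMod p) = 0 ∨ (b₀ ^ 2 * ξ₀ ≠ -1 ∧ 2 * (b₀ ^ 2 * ξ₀) ≠ 1)) := by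
  haveI : Fact p.Prime := ⟨hp⟩
  have hp2 : p ≠ 2 := by rintro rfl; exact (by decide : ¬ Odd 2) hodd
  have hchar : ringChar (ZMod p) ≠ 2 := by rw [ZMod.ringChar_zmod_n]; exact hp2
  obtain ⟨ξ₀, hξ⟩ := FiniteField.exists_nonsquare (F := ZMod p) hchar
  have hξ0 : ξ₀ ≠ 0 := by rintro rfl; exact hξ ⟨0, by ring⟩
  have hξns : ¬ ∃ y : ZMod p, ξ₀ = y ^ 2 := by
    rintro ⟨y, rfl⟩; exact hξ ⟨y, by ring⟩
  by_cases h3 : (3 : ZMod p) = 0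
  · exact ⟨ξ₀, 1, hξ0, one_ne_zero, hξns, Or.inl h3⟩
  by_cases hp5 : p = 5
  · subst hp5
    obtain ⟨b₀, hb0, hb⟩ := zmod5_key ξ₀ hξ0 hξns
    exact ⟨ξ₀, b₀, hξ0, hb0, hξns, Or.inr hb⟩
  -- general case: p ∉ {2,3,5}
  have hnz : ∀ k : ℕ, ¬ p ∣ k → ((k : ℕ) : ZMod p) ≠ 0 := by
    intro k hk h; exact hk ((ZMod.natCast_eq_zero_iff k p).mp h)
  have h2 : ((2 : ℕ) : ZMod p) ≠ 0 :=
    hnz 2 (fun h => hp2 ((Nat.prime_dvd_prime_iff_eq hp Nat.prime_two).mp h))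
  have h5 : ((5 : ℕ) : ZMod p) ≠ 0 :=
    hnz 5 (fun h => hp5 ((Nat.prime_dvd_prime_iff_eq hp (by norm_num)).mp h))
  suffices hb : ∃ b₀ : ZMod p, b₀ ≠ 0 ∧ (b₀ ^ 2 * ξ₀ ≠ -1 ∧ 2 * (b₀ ^ 2 * ξ₀) ≠ 1) by
    obtain ⟨b₀, hb0, hbb⟩ := hb
    exact ⟨ξ₀, b₀, hξ0, hb0, hξns, Or.inr hbb⟩
  by_contra hcon
  push_neg at hcon
  have h2z : (2 : ZMod p) ≠ 0 := by exact_mod_cast h2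
  have h3z : (3 : ZMod p) ≠ 0 := h3
  have h5z : (5 : ZMod p) ≠ 0 := by exact_mod_cast h5
  have getor : ∀ b₀ : ZMod p, b₀ ≠ 0 → (b₀ ^ 2 * ξ₀ = -1 ∨ 2 * (b₀ ^ 2 * ξ₀) = 1) := by
    intro b₀ hb0
    by_cases h : b₀ ^ 2 * ξ₀ = -1
    · exact Or.inl h
    · exact Or.inr (hcon b₀ hb0 h)
  have e1 := getor 1 one_ne_zero
  have e2 := getor 2 h2z
  have e3 := getor 3 h3z
  have hmul : ∀ a : ZMod p, a ≠ 0 → a * ξ₀ ≠ 0 := fun a ha => mul_ne_zero ha hξ0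
  have h8z : (8 : ZMod p) ≠ 0 := by
    have h : (8 : ZMod p) = 2 ^ 3 := by norm_num
    rw [h]; exact pow_ne_zero _ h2z
  have h6z : (6 : ZMod p) ≠ 0 := by
    have h : (6 : ZMod p) = 2 * 3 := by norm_num
    rw [h]; exact mul_ne_zero h2z h3z
  have h10z : (10 : ZMod p) ≠ 0 := by
    have h : (10 : ZMod p) = 2 * 5 := by norm_num
    rw [h]; exact mul_ne_zero h2z h5z
  have h16z : (16 : ZMod p) ≠ 0 := by
    have h : (16 : ZMod p) = 2 ^ 4 := by norm_num
    rw [h]; exact pow_ne_zero _ h2z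
  rcases e1 with h1 | h1 <;> rcases e2 with hh2 | hh2 <;> rcases e3 with hh3 | hh3
  · exact hmul 3 h3z (by linear_combination hh2 - h1)
  · exact hmul 3 h3z (by linear_combination hh2 - h1)
  · exact hmul 8 h8z (by linear_combination hh3 - h1)
  · exact hmul 10 h10z (by linear_combination hh3 - hh2)
  · exact hmul 5 h5z (by linear_combination hh3 - hh2)
  · exact hmul 16 h16z (by linear_combination hh3 - h1)
  · exact hmul 6 h6z (by linear_combination hh2 - h1)
  · exact hmul 6 h6z (by linear_combination hh2 - h1)

lemma fix_pow_pow' {L : Type*} [Monoid L] (p : ℕ) (a : L) (h : a ^ p = a) :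
    ∀ m : ℕ, a ^ (p ^ m) = a := by
  intro m
  induction m with
  | zero => simp
  | succ k ih => rw [pow_succ, pow_mul, ih, h]

lemma sq_one_of' (L : Type*) [Monoid L] (x : L) (n d : ℕ) (h1 : x ^ n = 1) (h2 : x ^ d = 1)
    (hd : Nat.gcd n d ∣ 2) : x ^ 2 = 1 := by
  obtain ⟨e, he⟩ := hd
  rw [he, pow_mul, (pow_gcd_eq_one.mpr ⟨h1, h2⟩), one_pow]

lemma no_common_root {L : Type*} [Field L] (p : ℕ) [Fact p.Prime] [CharP L p]
    (m q g n : ℕ) (hq : q = p ^ m) (hm1 : 1 ≤ m)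
    (hn2 : 2 ≤ n) (hqn : n + (q - 1) = 2 * g + 2) (hq3 : 3 ≤ q) (hp3 : 3 ≤ p)
    (hdvdgc : Nat.gcd n (p - 1) ∣ 2)
    (hAL : ((2 * g + 2 : ℕ) : L) * 2 = -1)
    (c ξ : L) (hc : c ≠ 0) (hξ : ξ ≠ 0) (hcp : c ^ p = c) (hξp : ξ ^ p = ξ)
    (hcond : (3 : L) ≠ 0 → (c * ξ ≠ -1 ∧ 2 * (c * ξ) ≠ 1))
    (z : L)
    (hz1 : z ^ (2 * g + 2) + c * z ^ (2 * n) - (2 * c * ξ + 1) * z ^ n + c * ξ ^ 2 = 0)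
    (hz2 : ((2 * g + 2 : ℕ) : L) * z ^ (2 * g + 2 - 1)
        + c * (((2 * n : ℕ) : L) * z ^ (2 * n - 1))
        - (2 * c * ξ + 1) * (((n : ℕ) : L) * z ^ (n - 1)) = 0) : False := by
  have h2L : (2 : L) ≠ 0 := by
    intro h
    have h' : ((2 : ℕ) : L) = 0 := by exact_mod_cast h
    have := (CharP.cast_eq_zero_iff L p 2).mp h'
    have := Nat.le_of_dvd (by norm_num) this
    omega
  have hqL : ((q : ℕ) : L) = 0 := by
    rw [hq]
    push_cast
    rw [CharP.cast_eq_zero L p]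
    exact zero_pow (by omega)
  have hnL : ((n : ℕ) : L) * 2 = 1 := by
    have hnat : n + q = 2 * g + 3 := by omega
    have hcst : ((n : ℕ) : L) + ((q : ℕ) : L) = ((2 * g + 3 : ℕ) : L) := by
      exact_mod_cast congrArg (Nat.cast : ℕ → L) hnat
    rw [hqL, add_zero] at hcst
    push_cast at hcst hAL ⊢
    linear_combination 2 * hcst + hAL
  have hnnne : ((n : ℕ) : L) ≠ 0 := by
    intro h; rw [h, zero_mul] at hnL; exact zero_ne_one hnL
  have haan : ((2 * g + 2 : ℕ) : L) = -((n : ℕ) : L) := by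
    have h2' : (((2 * g + 2 : ℕ) : L) + ((n : ℕ) : L)) * 2 = 0 := by
      linear_combination hAL + hnL
    rcases mul_eq_zero.mp h2' with h | h
    · linear_combination h
    · exact absurd h h2L
  have hzne : z ≠ 0 := by
    intro h
    rw [h] at hz1
    have e1 : 2 * g + 2 ≠ 0 := by omega
    have e2 : 2 * n ≠ 0 := by omega
    have e3 : n ≠ 0 := by omega
    rw [zero_pow e1, zero_pow e2, zero_pow e3] at hz1
    have : c * ξ ^ 2 = 0 := by linear_combination hz1
    rcases mul_eq_zero.mp this with h' | h'
    · exact hc h'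
    · exact hξ (by simpa using h')
  have hBL : ((2 * n : ℕ) : L) = ((n : ℕ) : L) * 2 := by push_cast; ring
  have hzB : z ^ (2 * n) = (z ^ n) ^ 2 := by rw [mul_comm 2 n, pow_mul]
  -- multiply derivative relation by z
  have p1 : z ^ (2 * g + 2 - 1) * z = z ^ (2 * g + 2) := by
    rw [← pow_succ, Nat.sub_add_cancel (by omega)]
  have p2 : z ^ (2 * n - 1) * z = z ^ (2 * n) := by
    rw [← pow_succ, Nat.sub_add_cancel (by omega)]
  have p3 : z ^ (n - 1) * z = z ^ n := by
    rw [← pow_succ, Nat.sub_add_cancel (by omega)]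
  have E1 : ((2 * g + 2 : ℕ) : L) * z ^ (2 * g + 2)
      + ((n : ℕ) : L) * 2 * c * (z ^ n) ^ 2 - ((n : ℕ) : L) * (2 * c * ξ + 1) * z ^ n = 0 := by
    have h := congrArg (· * z) hz2
    simp only [zero_mul] at h
    have E0 : ((2 * g + 2 : ℕ) : L) * (z ^ (2 * g + 2 - 1) * z)
        + c * (((2 * n : ℕ) : L) * (z ^ (2 * n - 1) * z))
        - (2 * c * ξ + 1) * (((n : ℕ) : L) * (z ^ (n - 1) * z)) = 0 := by
      linear_combination h
    rw [p1, p2, p3, hBL, hzB] at E0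
    linear_combination E0
  have R1 : z ^ (2 * g + 2) = 2 * c * (z ^ n) ^ 2 - (2 * c * ξ + 1) * z ^ n := by
    have hw : ((n : ℕ) : L) * (z ^ (2 * g + 2) - (2 * c * (z ^ n) ^ 2 - (2 * c * ξ + 1) * z ^ n)) = 0 := by
      linear_combination (-1 : L) * E1 + (z ^ (2 * g + 2)) * haan
    rcases mul_eq_zero.mp hw with h | h
    · exact absurd h hnnne
    · exact sub_eq_zero.mp h
  set t : L := z ^ n with ht
  have htne : t ≠ 0 := pow_ne_zero _ hzne
  have H3 : 3 * c * t ^ 2 - 2 * (2 * c * ξ + 1) * t + c * ξ ^ 2 = 0 := by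
    linear_combination hz1 - R1 - c * hzB
  set u : L := z ^ (q - 1) with hu
  have hune : u ≠ 0 := pow_ne_zero _ hzne
  have hAnq : z ^ (2 * g + 2) = u * t := by
    rw [ht, hu, ← pow_add, show q - 1 + n = 2 * g + 2 by omega]
  have hueq : u = 2 * c * t - (2 * c * ξ + 1) := by
    apply mul_right_cancel₀ htne
    rw [← hAnq, R1]; ring
  set s : L := t - ξ with hs
  have hus : u = 2 * c * s - 1 := by rw [hueq, hs]; ring
  have hQ : 3 * c * s ^ 2 + 2 * (c * ξ - 1) * s - 2 * ξ = 0 := by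
    linear_combination H3 + (3 * c * (s + t - ξ) + 2 * (c * ξ - 1)) * hs
  have h2p : (2 : L) ^ p = 2 := by
    simpa [frobenius_def] using map_ofNat (frobenius L p) 2
  have hQp : 3 * c * (s ^ p) ^ 2 + 2 * (c * ξ - 1) * (s ^ p) - 2 * ξ = 0 := by
    have h := congrArg (frobenius L p) hQ
    simp only [map_add, map_sub, map_mul, map_pow, map_ofNat, map_one, map_zero,
      frobenius_def] at h
    rwa [hcp, hξp] at h
  have htse : t = s + ξ := by rw [hs]; ring
  by_cases hss : s ^ p = s
  · -- Case A
    have htp : t ^ p = t := by rw [htse, add_pow_char, hss, hξp]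
    have hup : u ^ p = u := by
      rw [hus, sub_pow_char, mul_pow, mul_pow, h2p, hcp, hss, one_pow]
    have htq : t ^ (q - 1) = 1 := by
      have h' := fix_pow_pow' p t htp m
      rw [← hq] at h'
      apply mul_right_cancel₀ htne
      rw [← pow_succ, show q - 1 + 1 = q by omega, h', one_mul]
    have hun : u ^ n = 1 := by
      rw [hu, pow_right_comm, ← ht]; exact htq
    have hup1 : u ^ (p - 1) = 1 := by
      apply mul_right_cancel₀ hune
      rw [← pow_succ, show p - 1 + 1 = p by omega, hup, one_mul]
    have hu2 : u ^ 2 = 1 := sq_one_of' L u n (p - 1) hun hup1 hdvdgc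
    have huu : u = 1 ∨ u = -1 := mul_self_eq_one_iff.mp (by rw [← pow_two]; exact hu2)
    rcases huu with h1 | h1
    · have hcs : c * s - 1 = 0 := by
        have h2' : (c * s - 1) * 2 = 0 := by linear_combination h1 - hus
        rcases mul_eq_zero.mp h2' with h | h
        · exact h
        · exact absurd h h2L
      have hone : (1 : L) = 0 := by
        linear_combination c * hQ - (3 * (c * s + 1) + 2 * (c * ξ - 1)) * hcs
      exact one_ne_zero hone
    · have hs0 : s = 0 := by
        have h2' : s * (2 * c) = 0 := by linear_combination h1 - hus
        rcases mul_eq_zero.mp h2' with h | h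
        · exact h
        · exact absurd h (mul_ne_zero h2L hc)
      have hξz : ξ * 2 = 0 := by
        linear_combination (-1 : L) * hQ + (3 * c * s + 2 * (c * ξ - 1)) * hs0
      rcases mul_eq_zero.mp hξz with h | h
      · exact hξ h
      · exact h2L h
  · -- Case B
    have hssne : s - s ^ p ≠ 0 := fun h => hss (sub_eq_zero.mp h).symm
    have hsub : 3 * c * (s ^ 2 - (s ^ p) ^ 2) + 2 * (c * ξ - 1) * (s - s ^ p) = 0 := by
      linear_combination hQ - hQp
    by_cases h3 : (3 : L) = 0
    · have hfac : (2 * (c * ξ - 1)) * (s - s ^ p) = 0 := by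
        linear_combination hsub - c * (s ^ 2 - (s ^ p) ^ 2) * h3
      have hc1 : c * ξ - 1 = 0 := by
        rcases mul_eq_zero.mp hfac with h | h
        · rcases mul_eq_zero.mp h with h' | h'
          · exact absurd h' h2L
          · exact h'
        · exact absurd h hssne
      have hξz : ξ * 2 = 0 := by
        linear_combination (-1 : L) * hQ + c * s ^ 2 * h3 + 2 * s * hc1
      rcases mul_eq_zero.mp hξz with h | h
      · exact hξ h
      · exact h2L h
    · have hσ : 3 * c * (s + s ^ p) = 2 - 2 * c * ξ := by
        have hfac : (3 * c * (s + s ^ p) - (2 - 2 * c * ξ)) * (s - s ^ p) = 0 := by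
          linear_combination hsub
        rcases mul_eq_zero.mp hfac with h | h
        · exact sub_eq_zero.mp h
        · exact absurd h hssne
      have hπ : 3 * c * (s * s ^ p) = -2 * ξ := by
        linear_combination s * hσ - hQ
      have hspp : (s ^ p) ^ p = s := by
        have h := congrArg (frobenius L p) hσ
        simp only [map_add, map_sub, map_mul, map_pow, map_ofNat, map_one, map_zero,
          frobenius_def] at h
        rw [hcp, hξp] at h
        have hdiff : (3 * c) * ((s ^ p) ^ p - s) = 0 := by linear_combination h - hσ
        rcases mul_eq_zero.mp hdiff with h' | h'
        · rcases mul_eq_zero.mp h' with h'' | h''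
          · exact absurd h'' h3
          · exact absurd h'' hc
        · exact sub_eq_zero.mp h'
      have hupe : u ^ p = 2 * c * s ^ p - 1 := by
        rw [hus, sub_pow_char, mul_pow, mul_pow, h2p, hcp, one_pow]
      have htpe : t ^ p = s ^ p + ξ := by rw [htse, add_pow_char, hξp]
      have htppe : (t ^ p) ^ p = t := by
        rw [htpe, add_pow_char, hspp, hξp, ← htse]
      have hNtfix : (t * t ^ p) ^ p = t * t ^ p := by
        rw [mul_pow, htppe]; ring
      have hNtne : t * t ^ p ≠ 0 := mul_ne_zero htne (pow_ne_zero _ htne)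
      have hNtq : (t * t ^ p) ^ (q - 1) = 1 := by
        have h' := fix_pow_pow' p (t * t ^ p) hNtfix m
        rw [← hq] at h'
        apply mul_right_cancel₀ hNtne
        rw [← pow_succ, show q - 1 + 1 = q by omega, h', one_mul]
      have hunt : u ^ n = t ^ (q - 1) := by
        rw [hu, ht, pow_right_comm]
      have huptn : (u ^ p) ^ n = (t ^ p) ^ (q - 1) := by
        rw [pow_right_comm u p n, hunt, pow_right_comm]
      have hNun : (u * u ^ p) ^ n = 1 := by
        rw [mul_pow, hunt, huptn, ← mul_pow]; exact hNtq
      have hupp : (u ^ p) ^ p = u := by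
        rw [hupe, sub_pow_char, mul_pow, mul_pow, h2p, hcp, hspp, one_pow, ← hus]
      have hNufix : (u * u ^ p) ^ p = u * u ^ p := by
        rw [mul_pow, hupp]; ring
      have hNune : u * u ^ p ≠ 0 := mul_ne_zero hune (pow_ne_zero _ hune)
      have hNup1 : (u * u ^ p) ^ (p - 1) = 1 := by
        apply mul_right_cancel₀ hNune
        rw [← pow_succ, show p - 1 + 1 = p by omega, hNufix, one_mul]
      have hNu2 : (u * u ^ p) ^ 2 = 1 := sq_one_of' L _ n (p - 1) hNun hNup1 hdvdgc
      have hNuval : 3 * (u * u ^ p) = -4 * c * ξ - 1 := by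
        have he : u * u ^ p = 4 * c ^ 2 * (s * s ^ p) - 2 * c * (s + s ^ p) + 1 := by
          rw [hupe, hus]; ring
        linear_combination 3 * he + (4 * c) * hπ - 2 * hσ
      have huu1 : u * u ^ p = 1 ∨ u * u ^ p = -1 :=
        mul_self_eq_one_iff.mp (by rw [← pow_two]; exact hNu2)
      obtain ⟨hc1, hc2⟩ := hcond h3
      rcases huu1 with h1 | h1
      · apply hc1
        have h4 : (4 : L) ≠ 0 := by
          have h44 : (4 : L) = 2 * 2 := by norm_num
          rw [h44]; exact mul_ne_zero h2L h2L
        apply mul_right_cancel₀ h4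
        linear_combination hNuval - 3 * h1
      · apply hc2
        apply mul_right_cancel₀ h2L
        linear_combination hNuval - 3 * h1

lemma squarefree_glue {K : Type*} [Field K] (f : Polynomial K) (hf0 : f ≠ 0)
    (h : ∀ z : AlgebraicClosure K,
      ¬ ((f.map (algebraMap K (AlgebraicClosure K))).eval z = 0 ∧
         (derivative (f.map (algebraMap K (AlgebraicClosure K)))).eval z = 0)) :
    Squarefree f := by
  apply Polynomial.Separable.squarefree
  rw [← Polynomial.separable_map (algebraMap K (AlgebraicClosure K))]
  set F := f.map (algebraMap K (AlgebraicClosure K)) with hF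
  rw [Polynomial.separable_def]
  classical
  by_contra hncop
  have hdnu : ¬ IsUnit (EuclideanDomain.gcd F (derivative F)) :=
    fun hh => hncop (EuclideanDomain.gcd_isUnit_iff.mp hh)
  have hd0 : EuclideanDomain.gcd F (derivative F) ≠ 0 := by
    intro hh
    have hF0 := (EuclideanDomain.gcd_eq_zero_iff.mp hh).1
    rw [hF] at hF0
    exact hf0 ((Polynomial.map_eq_zero _).mp hF0)
  have hdeg : (EuclideanDomain.gcd F (derivative F)).degree ≠ 0 := by
    intro hh; exact hdnu (Polynomial.isUnit_iff_degree_eq_zero.mpr hh)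
  obtain ⟨z, hz⟩ := IsAlgClosed.exists_root _ hdeg
  exact h z ⟨hz.dvd (EuclideanDomain.gcd_dvd_left _ _), hz.dvd (EuclideanDomain.gcd_dvd_right _ _)⟩

theorem stmt_14 (p : ℕ) (hp : p.Prime) (hodd : Odd p) (m : ℕ) (hm : Odd m)
    (K : Type*) [Field K] [Fintype K] [CharP K p]
    (q : ℕ) (hq : q = p ^ m) (hcard : Fintype.card K = q)
    (g : ℕ) (hg1 : (q - 1) / 2 ≤ g) (hg2 : g < q - 2)
    (hgcd : Nat.gcd (2 * g + 2) (q - 1) = 2)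
    (hmodp : ((2 * (2 * g + 2) : ℕ) : ZMod p) = -1) :
    ∃ b ξ : K, b ≠ 0 ∧ ξ ≠ 0 ∧
      (∃ b₀ : ZMod p, b = ZMod.castHom (dvd_refl p) K b₀) ∧
      (∃ ξ₀ : ZMod p, ξ = ZMod.castHom (dvd_refl p) K ξ₀ ∧ ¬ ∃ y : ZMod p, ξ₀ = y ^ 2) ∧
      Squarefree ((X : Polynomial K) ^ (2 * g + 2)
          + C (b ^ 2) * X ^ (2 * (2 * g + 3 - q))
          - C (2 * b ^ 2 * ξ + 1) * X ^ (2 * g + 3 - q) + C (b ^ 2 * ξ ^ 2)) ∧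
      ∀ x : K, ∃ y : K, y ≠ 0 ∧
        ((X : Polynomial K) ^ (2 * g + 2)
            + C (b ^ 2) * X ^ (2 * (2 * g + 3 - q))
            - C (2 * b ^ 2 * ξ + 1) * X ^ (2 * g + 3 - q) + C (b ^ 2 * ξ ^ 2)).eval x
          = y ^ 2 := by
  haveI : Fact p.Prime := ⟨hp⟩
  -- basic numeric facts
  have hp2 : p ≠ 2 := by rintro rfl; exact (by decide : ¬ Odd 2) hodd
  have hp3 : 3 ≤ p := by rcases hodd with ⟨w, hw⟩; have := hp.two_le; omega
  have hm1 : 1 ≤ m := by rcases hm with ⟨w, hw⟩; omega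
  have hqodd : q % 2 = 1 := by
    rw [hq]; exact Nat.odd_iff.mp (hodd.pow)
  have hq3 : 3 ≤ q := by
    rw [hq]; calc 3 ≤ p := hp3
    _ = p ^ 1 := (pow_one p).symm
    _ ≤ p ^ m := Nat.pow_le_pow_right (by omega) hm1
  have hq5 : 5 ≤ q := by
    have := lt_of_le_of_lt hg1 hg2; omega
  have hqg : q ≤ 2 * g + 1 := by omega
  set n := 2 * g + 3 - q with hn
  have hn2 : 2 ≤ n := by omega
  have hqn : n + (q - 1) = 2 * g + 2 := by omega
  have hgcdn : Nat.gcd n (q - 1) = 2 := by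
    rw [← hgcd, ← hqn, Nat.gcd_add_self_left]
  have hndvd2 : 2 ∣ n := hgcdn ▸ Nat.gcd_dvd_left n (q - 1)
  have hdvdgc : Nat.gcd n (p - 1) ∣ 2 := by
    have h1 : p - 1 ∣ q - 1 := by
      rw [hq]; simpa using Nat.sub_dvd_pow_sub_pow p 1 m
    rw [← hgcdn]
    exact Nat.dvd_gcd (Nat.gcd_dvd_left _ _) ((Nat.gcd_dvd_right _ _).trans h1)
  -- choose ξ₀, b₀
  obtain ⟨ξ₀, b₀, hξ00, hb00, hξns, hcond⟩ := choice_lemma p hp hodd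
  set ψ : ZMod p →+* K := ZMod.castHom (dvd_refl p) K with hψ
  have hψinj : Function.Injective ψ := ψ.injective
  set b : K := ψ b₀ with hbdef
  set ξ : K := ψ ξ₀ with hξdef
  have hbne : b ≠ 0 := by
    simp only [hbdef]; rw [← map_zero ψ]; exact fun h => hb00 (hψinj h)
  have hξne : ξ ≠ 0 := by
    simp only [hξdef]; rw [← map_zero ψ]; exact fun h => hξ00 (hψinj h)
  -- Euler: ξ₀ ^ (p/2) = -1
  obtain ⟨k, hk⟩ := hodd
  have hchar : ringChar (ZMod p) ≠ 2 := by rw [ZMod.ringChar_zmod_n]; exact hp2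
  have hξeuler : ξ₀ ^ k = -1 := by
    have hcardz : Fintype.card (ZMod p) = p := ZMod.card p
    have hdich := FiniteField.pow_dichotomy (F := ZMod p) hchar hξ00
    rw [hcardz] at hdich
    have hk2 : p / 2 = k := by omega
    rw [hk2] at hdich
    rcases hdich with h | h
    · exact absurd ((ZMod.euler_criterion p hξ00).mpr (by rwa [hk2])) (by
        intro hsq; obtain ⟨y, hy⟩ := hsq; exact hξns ⟨y, by rw [hy]; ring⟩)
    · exact h
  -- geometric series: q = 2*k*r + 1 with r odd
  obtain ⟨r, hrodd, hreq⟩ := odd_geom (2 * k) ⟨k, by ring⟩ ((m - 1) / 2)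
  have hmm : 2 * ((m - 1) / 2) + 1 = m := by rcases hm with ⟨w, hw⟩; omega
  rw [hmm] at hreq
  have hq2kr : 2 * (k * r) + 1 = q := by rw [hq, hk, ← hreq]; ring
  -- ξ ^ (k*r) = -1 in K
  have hξpow : ξ ^ (k * r) = -1 := by
    have h0 : ξ₀ ^ (k * r) = -1 := by
      rw [pow_mul, hξeuler, Odd.neg_one_pow hrodd]
    rw [hξdef, ← map_pow, h0, map_neg, map_one]
  have hm1ne1 : (-1 : K) ≠ 1 := by
    haveI : Fact (2 < p) := ⟨by omega⟩
    exact CharP.neg_one_ne_one K p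
  -- x^n is never ξ for x ≠ 0
  have hxnξ : ∀ x : K, x ≠ 0 → x ^ n ≠ ξ := by
    intro x hx hxe
    obtain ⟨n₂, hn₂⟩ := hndvd2
    have hx1 : x ^ (q - 1) = 1 := by
      rw [← hcard]; exact FiniteField.pow_card_sub_one_eq_one x hx
    have : ξ ^ (k * r) = 1 := by
      rw [← hxe, ← pow_mul]
      have hee : n * (k * r) = n₂ * (q - 1) := by
        have h' : q - 1 = 2 * (k * r) := by omega
        rw [h', hn₂]; ring
      rw [hee, pow_mul, ← hcard]
      exact FiniteField.pow_card_sub_one_eq_one _ (pow_ne_zero _ hx)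
    rw [hξpow] at this
    exact hm1ne1 this
  refine ⟨b, ξ, hbne, hξne, ⟨b₀, rfl⟩, ⟨ξ₀, rfl, hξns⟩, ?_, ?_⟩
  · -- Squarefree
    have e1 : 2 * g + 2 ≠ 0 := by omega
    have e2 : 2 * n ≠ 0 := by omega
    have e3 : n ≠ 0 := by omega
    apply squarefree_glue
    · intro h0
      have heval := congrArg (eval (0 : K)) h0
      simp only [eval_add, eval_sub, eval_mul, eval_pow, eval_C, eval_X, eval_zero,
        zero_pow e1, zero_pow e2, zero_pow e3, mul_zero, zero_add, sub_zero, zero_sub,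
        add_zero, neg_zero] at heval
      exact (mul_ne_zero (pow_ne_zero 2 hbne) (pow_ne_zero 2 hξne)) heval
    · intro z hcon
      obtain ⟨hz1, hz2⟩ := hcon
      haveI : CharP (AlgebraicClosure K) p :=
        charP_of_injective_algebraMap (algebraMap K (AlgebraicClosure K)).injective p
      set ι : K →+* AlgebraicClosure K := algebraMap K (AlgebraicClosure K) with hι
      have hALC : ((2 * g + 2 : ℕ) : AlgebraicClosure K) * 2 = -1 := by
        have hz0 : ((2 * (2 * g + 2) + 1 : ℕ) : ZMod p) = 0 := by
          rw [Nat.cast_add, Nat.cast_one, hmodp]; ring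
        have hdvd : p ∣ 2 * (2 * g + 2) + 1 := (ZMod.natCast_eq_zero_iff _ p).mp hz0
        have hLz : ((2 * (2 * g + 2) + 1 : ℕ) : AlgebraicClosure K) = 0 :=
          (CharP.cast_eq_zero_iff _ p _).mpr hdvd
        push_cast at hLz ⊢
        linear_combination hLz
      have hbp : (ι b) ^ p = ι b := by
        rw [hbdef, ← map_pow, ← map_pow, ZMod.pow_card]
      have hξpL : (ι ξ) ^ p = ι ξ := by
        rw [hξdef, ← map_pow, ← map_pow, ZMod.pow_card]
      have hcpL : ((ι b) ^ 2) ^ p = (ι b) ^ 2 := by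
        rw [← pow_mul, mul_comm 2 p, pow_mul, hbp]
      have hbLne : ι b ≠ 0 := fun hh => hbne (ι.injective (by rw [hh, map_zero]))
      have hξLne : ι ξ ≠ 0 := fun hh => hξne (ι.injective (by rw [hh, map_zero]))
      have hcondL : (3 : AlgebraicClosure K) ≠ 0 →
          ((ι b) ^ 2 * ι ξ ≠ -1 ∧ 2 * ((ι b) ^ 2 * ι ξ) ≠ 1) := by
        intro h3
        have hχval : ι.comp ψ (b₀ ^ 2 * ξ₀) = (ι b) ^ 2 * ι ξ := by
          rw [map_mul, map_pow, hbdef, hξdef]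
          simp [RingHom.comp_apply]
        have hχinj : Function.Injective (ι.comp ψ) := (ι.comp ψ).injective
        rcases hcond with hcc | ⟨hc1, hc2⟩
        · exact absurd (by rw [← map_ofNat (ι.comp ψ) 3, hcc, map_zero] :
            (3 : AlgebraicClosure K) = 0) h3
        · constructor
          · intro he
            exact hc1 (hχinj (by rw [hχval, he, map_neg, map_one]))
          · intro he
            exact hc2 (hχinj (by rw [map_mul, map_ofNat, hχval, he, map_one]))
      have hFeq : ((X : Polynomial K) ^ (2 * g + 2) + C (b ^ 2) * X ^ (2 * n)
            - C (2 * b ^ 2 * ξ + 1) * X ^ n + C (b ^ 2 * ξ ^ 2)).map ι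
          = X ^ (2 * g + 2) + C ((ι b) ^ 2) * X ^ (2 * n)
            - C (2 * (ι b) ^ 2 * ι ξ + 1) * X ^ n
            + C ((ι b) ^ 2 * (ι ξ) ^ 2) := by
        simp [Polynomial.map_add, Polynomial.map_sub, Polynomial.map_mul, Polynomial.map_pow,
          Polynomial.map_X, Polynomial.map_C, map_mul, map_pow, map_add, map_one, map_ofNat]
      rw [hFeq] at hz1 hz2
      have hz1' : z ^ (2 * g + 2) + (ι b) ^ 2 * z ^ (2 * n)
          - (2 * (ι b) ^ 2 * ι ξ + 1) * z ^ n + (ι b) ^ 2 * (ι ξ) ^ 2 = 0 := by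
        simp only [eval_add, eval_sub, eval_mul, eval_pow, eval_C, eval_X] at hz1
        linear_combination hz1
      have hz2' : ((2 * g + 2 : ℕ) : AlgebraicClosure K) * z ^ (2 * g + 2 - 1)
          + (ι b) ^ 2 * (((2 * n : ℕ) : AlgebraicClosure K) * z ^ (2 * n - 1))
          - (2 * (ι b) ^ 2 * ι ξ + 1) * (((n : ℕ) : AlgebraicClosure K) * z ^ (n - 1)) = 0 := by
        simp only [derivative_add, derivative_sub, derivative_mul, derivative_C,
          derivative_X_pow, derivative_one, eval_add, eval_sub, eval_mul, eval_pow, eval_C,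
          eval_X, zero_mul, mul_zero, zero_add, add_zero] at hz2
        linear_combination hz2
      exact no_common_root p m q g n hq hm1 hn2 hqn hq3 hp3 hdvdgc hALC
        ((ι b) ^ 2) (ι ξ) (pow_ne_zero 2 hbLne) hξLne hcpL hξpL hcondL z hz1' hz2'
  · -- values
    intro x
    by_cases hx : x = 0
    · refine ⟨b * ξ, mul_ne_zero hbne hξne, ?_⟩
      subst hx
      have e1 : (2 * g + 2) ≠ 0 := by omega
      have e2 : (2 * (2 * g + 3 - q)) ≠ 0 := by omega
      have e3 : (2 * g + 3 - q) ≠ 0 := by omega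
      simp [eval_pow, zero_pow, e1, e2, e3]
      rw [zero_pow (by omega : 2 * n ≠ 0)]
      ring_nf
      rw [zero_pow (by omega : n ≠ 0)]
      ring
    · refine ⟨b * (x ^ n - ξ), ?_, ?_⟩
      · exact mul_ne_zero hbne (sub_ne_zero.mpr (hxnξ x hx))
      · have hx1 : x ^ (q - 1) = 1 := by
          rw [← hcard]; exact FiniteField.pow_card_sub_one_eq_one x hx
        have hxA : x ^ (2 * g + 2) = x ^ n := by
          rw [← hqn, pow_add, hx1, mul_one]
        have hxB : x ^ (2 * (2 * g + 3 - q)) = (x ^ n) ^ 2 := by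
          rw [← hn, mul_comm 2 n, pow_mul]
        simp only [eval_add, eval_sub, eval_mul, eval_pow, eval_C, eval_X]
        rw [hxA, hxB]
        ring
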